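/- The completion of the space of finite barcodes for the bottleneck distance is the space of infinite barcodes with the finiteness property: the set of infinite barcodes B such that for every ε > 0 only finitely many intervals of B have length greater than ε, equipped with the bottleneck distance, is a complete extended metric space in which the finite barcodes form a dense subset. -/

import Mathlib

open scoped ENNReal Classical

/-- A bar `(a, b]` with `-∞ ≤ a ≤ b ≤ +∞`, encoded by its pair of endpoints in `EReal`. -/
abbrev Bar : Type := EReal × EReal

/-- The distance `|x - y|` between two extended-real endpoints. -/
noncomputable def erealDist (x y : EReal) : ℝ≥0∞ :=
  if x = y then 0
  else if x = ⊤ ∨ x = ⊥ ∨ y = ⊤ ∨ y = ⊥ then ⊤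
  else ENNReal.ofReal |x.toReal - y.toReal|

/-- `d((a,b], (c,d]) = max (|c - a|) (|d - b|)`. -/
noncomputable def barDist (I J : Bar) : ℝ≥0∞ :=
  max (erealDist I.1 J.1) (erealDist I.2 J.2)

/-- The length of the bar `(a, b]`. -/
noncomputable def barLength (I : Bar) : ℝ≥0∞ := erealDist I.1 I.2

/-- A countable family of intervals (an infinite barcode is the equivalence class of such a
family); trivial intervals serve as padding, so this also encodes finite families. -/
def ValidFam (f : ℕ → Bar) : Prop := ∀ n, (f n).1 ≤ (f n).2

/-- The finiteness property defining the completion: for every positive `ε`, only finitely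
many intervals have length greater than `ε`. -/
def TameFam (f : ℕ → Bar) : Prop :=
  ∀ ε : ℝ≥0∞, 0 < ε → {n : ℕ | ε < barLength (f n)}.Finite

/-- Families with only finitely many nontrivial intervals: these are the finite barcodes. -/
def FiniteFam (f : ℕ → Bar) : Prop := {n : ℕ | (f n).1 < (f n).2}.Finite

/-- Two families represent the same (infinite) barcode if deleting all trivial intervals
yields the same family up to a bijection of the index sets. -/
def EquivFam (f g : ℕ → Bar) : Prop :=
  ∃ e : {n : ℕ // (f n).1 < (f n).2} ≃ {n : ℕ // (g n).1 < (g n).2},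
    ∀ n : {n : ℕ // (f n).1 < (f n).2}, g (e n).val = f n.val

/-- A partial matching between two countable families realizing the bound `ε`. -/
def InfMatching (f g : ℕ → Bar) (ε : ℝ≥0∞) : Prop :=
  ∃ (S T : Set ℕ) (σ : S ≃ T),
    (∀ n : S, barDist (f n.val) (g (σ n).val) ≤ ε) ∧
    (∀ n : ℕ, n ∉ S → barLength (f n) ≤ 2 * ε) ∧
    (∀ n : ℕ, n ∉ T → barLength (g n) ≤ 2 * ε)

/-- The bottleneck distance between two countable families of intervals. -/
noncomputable def dBotInf (f g : ℕ → Bar) : ℝ≥0∞ := sInf {ε : ℝ≥0∞ | InfMatching f g ε}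

-- batch 1 : erealDist basics
lemma erealDist_self (x : EReal) : erealDist x x = 0 := by simp [erealDist]

lemma erealDist_comm (x y : EReal) : erealDist x y = erealDist y x := by
  unfold erealDist
  by_cases h : x = y
  · simp [h]
  · simp only [h, Ne.symm h, if_false]
    rw [abs_sub_comm]
    congr 1
    exact propext (by tauto)

lemma erealDist_finite {x y : EReal} (hx : x ≠ ⊤) (hx' : x ≠ ⊥) (hy : y ≠ ⊤) (hy' : y ≠ ⊥) :
    erealDist x y = ENNReal.ofReal |x.toReal - y.toReal| := by
  unfold erealDist
  by_cases h : x = y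
  · simp [h]
  · simp [h, hx, hx', hy, hy']

lemma erealDist_eq_zero {x y : EReal} (h : erealDist x y = 0) : x = y := by
  by_contra hne
  unfold erealDist at h
  rw [if_neg hne] at h
  by_cases hc : x = ⊤ ∨ x = ⊥ ∨ y = ⊤ ∨ y = ⊥
  · rw [if_pos hc] at h; exact ENNReal.top_ne_zero h
  · rw [if_neg hc] at h
    push_neg at hc
    obtain ⟨hx, hx', hy, hy'⟩ := hc
    rw [ENNReal.ofReal_eq_zero, abs_nonpos_iff, sub_eq_zero] at h
    apply hne
    rw [← EReal.coe_toReal hx hx', ← EReal.coe_toReal hy hy', h]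

lemma erealDist_pos {x y : EReal} (h : x ≠ y) : 0 < erealDist x y := by
  rcases eq_or_ne (erealDist x y) 0 with h0 | h0
  · exact absurd (erealDist_eq_zero h0) h
  · exact pos_iff_ne_zero.mpr h0

lemma eq_top_of_erealDist_ne_top {x y : EReal} (h : erealDist x y ≠ ⊤) (hx : x = ⊤) : y = ⊤ := by
  by_contra hy
  apply h
  unfold erealDist
  have hne : x ≠ y := by rw [hx]; exact fun e => hy e.symm
  rw [if_neg hne, if_pos (Or.inl hx)]

lemma eq_bot_of_erealDist_ne_top {x y : EReal} (h : erealDist x y ≠ ⊤) (hx : x = ⊥) : y = ⊥ := by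
  by_contra hy
  apply h
  unfold erealDist
  have hne : x ≠ y := by rw [hx]; exact fun e => hy e.symm
  rw [if_neg hne, if_pos (Or.inr (Or.inl hx))]

lemma erealDist_triangle (x y z : EReal) :
    erealDist x z ≤ erealDist x y + erealDist y z := by
  by_cases hxz : x = z
  · simp [hxz, erealDist_self]
  rcases eq_or_ne (erealDist x y) ⊤ with h1 | h1
  · simp [h1]
  rcases eq_or_ne (erealDist y z) ⊤ with h2 | h2
  · simp [h2]
  -- now both RHS distances finite
  by_cases hx : x = ⊤
  · have hy := eq_top_of_erealDist_ne_top h1 hx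
    have hz := eq_top_of_erealDist_ne_top h2 hy
    exact absurd (hx.trans hz.symm) hxz
  by_cases hx' : x = ⊥
  · have hy := eq_bot_of_erealDist_ne_top h1 hx'
    have hz := eq_bot_of_erealDist_ne_top h2 hy
    exact absurd (hx'.trans hz.symm) hxz
  by_cases hy : y = ⊤
  · exact absurd (eq_top_of_erealDist_ne_top (by rwa [erealDist_comm]) hy) hx
  by_cases hy' : y = ⊥
  · exact absurd (eq_bot_of_erealDist_ne_top (by rwa [erealDist_comm]) hy') hx'
  by_cases hz : z = ⊤
  · exact absurd (eq_top_of_erealDist_ne_top (by rwa [erealDist_comm]) hz) hy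
  by_cases hz' : z = ⊥
  · exact absurd (eq_bot_of_erealDist_ne_top (by rwa [erealDist_comm]) hz') hy'
  rw [erealDist_finite hx hx' hz hz', erealDist_finite hx hx' hy hy',
    erealDist_finite hy hy' hz hz', ← ENNReal.ofReal_add (abs_nonneg _) (abs_nonneg _)]
  exact ENNReal.ofReal_le_ofReal (abs_sub_le _ _ _)

lemma erealDist_coe (x y : ℝ) : erealDist (x : EReal) (y : EReal) = ENNReal.ofReal |x - y| := by
  rw [erealDist_finite (by simp) (by simp) (by simp) (by simp)]
  simp

-- batch 2 : barDist / barLength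
lemma barDist_self (I : Bar) : barDist I I = 0 := by simp [barDist, erealDist_self]

lemma barDist_comm (I J : Bar) : barDist I J = barDist J I := by
  simp [barDist, erealDist_comm I.1 J.1, erealDist_comm I.2 J.2]

lemma barDist_triangle (I J K : Bar) : barDist I K ≤ barDist I J + barDist J K := by
  refine max_le ?_ ?_
  · exact (erealDist_triangle _ _ _).trans (add_le_add (le_max_left _ _) (le_max_left _ _))
  · exact (erealDist_triangle _ _ _).trans (add_le_add (le_max_right _ _) (le_max_right _ _))

lemma barDist_eq_zero {I J : Bar} (h : barDist I J = 0) : I = J := by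
  have h1 : erealDist I.1 J.1 = 0 := le_antisymm ((le_max_left _ _).trans h.le) (zero_le)
  have h2 : erealDist I.2 J.2 = 0 := le_antisymm ((le_max_right _ _).trans h.le) (zero_le)
  exact Prod.ext (erealDist_eq_zero h1) (erealDist_eq_zero h2)

lemma barLength_le (I J : Bar) : barLength I ≤ barLength J + 2 * barDist I J := by
  calc barLength I ≤ erealDist I.1 J.1 + (erealDist J.1 J.2 + erealDist J.2 I.2) :=
        (erealDist_triangle _ J.1 _).trans (by
          exact add_le_add_right (erealDist_triangle _ J.2 _) _)
    _ ≤ barDist I J + (barLength J + barDist I J) := by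
        refine add_le_add (le_max_left _ _) (add_le_add le_rfl ?_)
        rw [erealDist_comm]; exact le_max_right _ _
    _ = barLength J + 2 * barDist I J := by ring

-- batch 3 : matchings
lemma infMatching_mono {f g : ℕ → Bar} {ε ε' : ℝ≥0∞} (h : ε ≤ ε') (M : InfMatching f g ε) :
    InfMatching f g ε' := by
  obtain ⟨S, T, σ, h1, h2, h3⟩ := M
  exact ⟨S, T, σ, fun n => (h1 n).trans h,
    fun n hn => (h2 n hn).trans (mul_le_mul_right h 2),
    fun n hn => (h3 n hn).trans (mul_le_mul_right h 2)⟩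

lemma infMatching_self (f : ℕ → Bar) : InfMatching f f 0 :=
  ⟨Set.univ, Set.univ, Equiv.refl _, fun n => by simp [barDist_self],
    fun n hn => absurd (Set.mem_univ n) hn, fun n hn => absurd (Set.mem_univ n) hn⟩

lemma infMatching_symm {f g : ℕ → Bar} {ε : ℝ≥0∞} (M : InfMatching f g ε) :
    InfMatching g f ε := by
  obtain ⟨S, T, σ, h1, h2, h3⟩ := M
  refine ⟨T, S, σ.symm, fun m => ?_, h3, h2⟩
  have := h1 (σ.symm m)
  rwa [Equiv.apply_symm_apply, barDist_comm] at this

/-- Functional (set-bijection) form of a matching. -/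
lemma infMatching_iff_fun {f g : ℕ → Bar} {ε : ℝ≥0∞} :
    InfMatching f g ε ↔ ∃ (S T : Set ℕ) (F : ℕ → ℕ), Set.BijOn F S T ∧
      (∀ n ∈ S, barDist (f n) (g (F n)) ≤ ε) ∧
      (∀ n : ℕ, n ∉ S → barLength (f n) ≤ 2 * ε) ∧
      (∀ n : ℕ, n ∉ T → barLength (g n) ≤ 2 * ε) := by
  constructor
  · rintro ⟨S, T, σ, h1, h2, h3⟩
    classical
    refine ⟨S, T, fun n => if h : n ∈ S then (σ ⟨n, h⟩).val else n, ⟨?_, ?_, ?_⟩, ?_, h2, h3⟩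
    · intro n hn; simp only [dif_pos hn]; exact (σ ⟨n, hn⟩).prop
    · intro a ha b hb hab
      simp only [dif_pos ha, dif_pos hb] at hab
      have := σ.injective (Subtype.ext hab)
      exact congrArg Subtype.val this
    · intro t ht
      refine ⟨(σ.symm ⟨t, ht⟩).val, (σ.symm ⟨t, ht⟩).prop, ?_⟩
      simp only [dif_pos (σ.symm ⟨t, ht⟩).prop]
      rw [Subtype.coe_eta, Equiv.apply_symm_apply]
    · intro n hn; simp only [dif_pos hn]; exact h1 ⟨n, hn⟩
  · rintro ⟨S, T, F, hbij, h1, h2, h3⟩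
    refine ⟨S, T, hbij.equiv F, fun n => h1 n.val n.prop, h2, h3⟩

lemma infMatching_comp {f g h : ℕ → Bar} {ε₁ ε₂ : ℝ≥0∞}
    (M1 : InfMatching f g ε₁) (M2 : InfMatching g h ε₂) : InfMatching f h (ε₁ + ε₂) := by
  rw [infMatching_iff_fun] at M1 M2 ⊢
  obtain ⟨S₁, T₁, F₁, hb₁, h1₁, h2₁, h3₁⟩ := M1
  obtain ⟨S₂, T₂, F₂, hb₂, h1₂, h2₂, h3₂⟩ := M2
  set S : Set ℕ := S₁ ∩ F₁ ⁻¹' S₂ with hS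
  have hinj : Set.InjOn (F₂ ∘ F₁) S := by
    intro a ha b hb hab
    exact hb₁.injOn ha.1 hb.1 (hb₂.injOn ha.2 hb.2 hab)
  refine ⟨S, (F₂ ∘ F₁) '' S, F₂ ∘ F₁, hinj.bijOn_image, ?_, ?_, ?_⟩
  · rintro n ⟨hn₁, hn₂⟩
    calc barDist (f n) (h (F₂ (F₁ n)))
        ≤ barDist (f n) (g (F₁ n)) + barDist (g (F₁ n)) (h (F₂ (F₁ n))) := barDist_triangle _ _ _
      _ ≤ ε₁ + ε₂ := add_le_add (h1₁ n hn₁) (h1₂ (F₁ n) hn₂)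
  · intro n hn
    by_cases hn₁ : n ∈ S₁
    · have hn₂ : F₁ n ∉ S₂ := fun hmem => hn ⟨hn₁, hmem⟩
      calc barLength (f n) ≤ barLength (g (F₁ n)) + 2 * barDist (f n) (g (F₁ n)) :=
            barLength_le _ _
        _ ≤ 2 * ε₂ + 2 * ε₁ := add_le_add (h2₂ _ hn₂) (mul_le_mul_right (h1₁ n hn₁) 2)
        _ = 2 * (ε₁ + ε₂) := by ring
    · exact (h2₁ n hn₁).trans (mul_le_mul_right le_self_add 2)
  · intro m hm
    by_cases hm₂ : m ∈ T₂
    · obtain ⟨z, hz, hzm⟩ := hb₂.surjOn hm₂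
      by_cases hz₁ : z ∈ T₁
      · obtain ⟨w, hw, hwz⟩ := hb₁.surjOn hz₁
        exfalso
        exact hm ⟨w, ⟨hw, by rw [Set.mem_preimage, hwz]; exact hz⟩, by simp [hwz, hzm]⟩
      · calc barLength (h m) = barLength (h (F₂ z)) := by rw [hzm]
          _ ≤ barLength (g z) + 2 * barDist (h (F₂ z)) (g z) := barLength_le _ _
          _ ≤ 2 * ε₁ + 2 * ε₂ := add_le_add (h3₁ _ hz₁)
              (mul_le_mul_right (by rw [barDist_comm]; exact h1₂ z hz) 2)
          _ = 2 * (ε₁ + ε₂) := by ring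
    · exact (h3₂ m hm₂).trans (mul_le_mul_right le_add_self 2)

lemma dBotInf_le {f g : ℕ → Bar} {ε : ℝ≥0∞} (M : InfMatching f g ε) : dBotInf f g ≤ ε :=
  sInf_le M

lemma infMatching_of_lt {f g : ℕ → Bar} {ε : ℝ≥0∞} (h : dBotInf f g < ε) : InfMatching f g ε := by
  obtain ⟨ε', hε', hlt⟩ := exists_lt_of_csInf_lt (by
    exact Set.nonempty_of_mem (infMatching_mono le_top
      (infMatching_mono (le_refl (⊤ : ℝ≥0∞)) ⟨∅, ∅, Equiv.refl _, fun n => n.prop.elim,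
        fun n _ => by simp, fun n _ => by simp⟩))) h
  exact infMatching_mono hlt.le hε'

lemma infMatching_top (f g : ℕ → Bar) : InfMatching f g ⊤ :=
  ⟨∅, ∅, Equiv.refl _, fun n => n.prop.elim, fun n _ => by simp, fun n _ => by simp⟩

lemma dBotInf_symm (f g : ℕ → Bar) : dBotInf f g = dBotInf g f := by
  unfold dBotInf
  congr 1
  ext ε
  exact ⟨fun M => infMatching_symm M, fun M => infMatching_symm M⟩

lemma dBotInf_triangle (f g h : ℕ → Bar) : dBotInf f h ≤ dBotInf f g + dBotInf g h := by
  refine ENNReal.le_of_forall_pos_le_add fun δ hδ hfin => ?_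
  have h1 : dBotInf f g < dBotInf f g + δ / 2 := by
    refine ENNReal.lt_add_right ?_ (by simp [hδ.ne'])
    exact ne_top_of_lt (lt_of_le_of_lt (le_add_right le_rfl) hfin)
  have h2 : dBotInf g h < dBotInf g h + δ / 2 := by
    refine ENNReal.lt_add_right ?_ (by simp [hδ.ne'])
    exact ne_top_of_lt (lt_of_le_of_lt (le_add_left le_rfl) hfin)
  have := dBotInf_le (infMatching_comp (infMatching_of_lt h1) (infMatching_of_lt h2))
  calc dBotInf f h ≤ (dBotInf f g + δ/2) + (dBotInf g h + δ/2) := this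
    _ = dBotInf f g + dBotInf g h + (δ/2 + δ/2) := by ring
    _ = dBotInf f g + dBotInf g h + δ := by rw [ENNReal.add_halves]

-- batch 4 : density and separation
lemma density_part (f : ℕ → Bar) (hv : ValidFam f) (ht : TameFam f) (ε : ℝ≥0∞) (hε : 0 < ε) :
    ∃ g : ℕ → Bar, ValidFam g ∧ FiniteFam g ∧ dBotInf f g ≤ ε := by
  classical
  set S : Set ℕ := {n | ε < barLength (f n)} with hSdef
  refine ⟨fun n => if n ∈ S then f n else (0, 0), fun n => ?_, ?_, ?_⟩
  · by_cases h : n ∈ S <;> simp [h, hv n]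
  · refine Set.Finite.subset (ht ε hε) fun n hn => ?_
    simp only [Set.mem_setOf_eq] at hn
    by_cases h : n ∈ S
    · exact h
    · simp [h, barLength, erealDist_self] at hn
  · refine dBotInf_le (infMatching_iff_fun.mpr ⟨S, S, id, ⟨fun n hn => hn, fun a _ b _ h => h,
      fun n hn => ⟨n, hn, rfl⟩⟩, fun n hn => ?_, fun n hn => ?_, fun n hn => ?_⟩)
    · simp only [id, if_pos hn, barDist_self]; exact zero_le
    · have : barLength (f n) ≤ ε := not_lt.mp hn
      exact this.trans (le_mul_of_one_le_left (zero_le) one_le_two)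
    · simp [if_neg hn, barLength, erealDist_self]

lemma exists_eps_lemma {a b : ℝ≥0∞} (h : a < b) : ∃ ε : ℝ≥0∞, 0 < ε ∧ ε ≠ ⊤ ∧ a + 2 * ε < b := by
  rcases eq_or_ne b ⊤ with rfl | hb
  · exact ⟨1, one_pos, ENNReal.one_ne_top, by
      refine ENNReal.add_lt_top.mpr ⟨h.ne_top.lt_top, ?_⟩
      simp⟩
  · have hab : (0 : ℝ≥0∞) < b - a := tsub_pos_of_lt h
    have habt : b - a ≠ ⊤ := (tsub_le_self.trans_lt (lt_top_iff_ne_top.mpr hb)).ne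
    refine ⟨(b - a) / 2 / 2, ENNReal.half_pos (ENNReal.half_pos hab.ne').ne', ?_, ?_⟩
    · exact (ENNReal.div_lt_top (ENNReal.div_lt_top habt two_ne_zero).ne two_ne_zero).ne
    · have h2 : 2 * ((b - a) / 2 / 2) = (b - a) / 2 := by
        rw [two_mul, ENNReal.add_halves]
      rw [h2]
      calc a + (b - a) / 2 < a + (b - a) := by
            exact ENNReal.add_lt_add_left (h.trans (lt_top_iff_ne_top.mpr hb)).ne
              (ENNReal.half_lt_self hab.ne' habt)
        _ = b := add_tsub_cancel_of_le h.le

lemma fiber_card_le {f g : ℕ → Bar} (hf : TameFam f) (hg : TameFam g)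
    (hM : ∀ ε : ℝ≥0∞, 0 < ε → InfMatching f g ε) {I : Bar} (hI : 0 < barLength I) :
    {n | f n = I}.ncard ≤ {n | g n = I}.ncard := by
  classical
  set ℓ := barLength I with hldef
  obtain ⟨ℓ', hℓ'0, hℓ'ℓ⟩ := exists_between hI
  have hGbig : {m | ℓ' < barLength (g m)}.Finite := hg ℓ' hℓ'0
  have hGfib : {m | g m = I}.Finite := hGbig.subset (fun m hm => by
    simp only [Set.mem_setOf_eq] at hm ⊢; rw [hm]; exact hℓ'ℓ)
  set Dset : Set ℕ := {m | ℓ' < barLength (g m)} ∩ {m | g m ≠ I} with hDdef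
  have hDfin : Dset.Finite := hGbig.subset Set.inter_subset_left
  set Dvals : Set ℝ≥0∞ := (fun m => barDist I (g m)) '' Dset with hDvals
  have hDvfin : Dvals.Finite := hDfin.image _
  have hδpos : ∀ x ∈ Dvals, 0 < x := by
    rintro x ⟨m, hm, rfl⟩
    rcases eq_or_ne (barDist I (g m)) 0 with h0 | h0
    · exact absurd (barDist_eq_zero h0).symm hm.2
    · exact pos_iff_ne_zero.mpr h0
  obtain ⟨ε₀, hε₀pos, hε₀top, hε₀⟩ := exists_eps_lemma hℓ'ℓ
  -- δ : infimum of the distances to other long bars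
  set δ : ℝ≥0∞ := sInf Dvals with hδdef
  have hδ : 0 < δ := by
    rcases Dvals.eq_empty_or_nonempty with he | hne
    · simp [hδdef, he]
    · exact hδpos _ (hne.csInf_mem hDvfin)
  set ε : ℝ≥0∞ := min ε₀ (δ / 2) with hεdef
  have hεpos : 0 < ε := lt_min hε₀pos (ENNReal.half_pos hδ.ne')
  have hεε₀ : ε ≤ ε₀ := min_le_left _ _
  have key : ℓ' + 2 * ε < ℓ := lt_of_le_of_lt (add_le_add le_rfl (mul_le_mul_right hεε₀ 2)) hε₀
  obtain ⟨S, T, F, hbij, h1, h2, h3⟩ := infMatching_iff_fun.mp (hM ε hεpos)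
  have hmem : ∀ n ∈ {n | f n = I}, F n ∈ {m | g m = I} := by
    intro n hn
    simp only [Set.mem_setOf_eq] at hn ⊢
    have hnS : n ∈ S := by
      by_contra hnS
      have := h2 n hnS
      rw [hn] at this
      exact absurd ((le_add_left (le_refl (2*ε))).trans_lt key) (not_lt.mpr this)
    have hdist : barDist I (g (F n)) ≤ ε := by rw [← hn]; exact h1 n hnS
    have hbig : ℓ' < barLength (g (F n)) := by
      by_contra hsmall
      have hlen : ℓ ≤ barLength (g (F n)) + 2 * barDist I (g (F n)) := barLength_le _ _
      have : ℓ ≤ ℓ' + 2 * ε :=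
        hlen.trans (add_le_add (not_lt.mp hsmall) (mul_le_mul_right hdist 2))
      exact absurd key (not_lt.mpr this)
    by_contra hne
    have hmemD : F n ∈ Dset := ⟨hbig, hne⟩
    have : δ ≤ barDist I (g (F n)) := sInf_le ⟨F n, hmemD, rfl⟩
    -- ε < barDist I (g (F n)) : contradiction with hdist
    rcases eq_or_ne δ ⊤ with hdt | hdt
    · rw [hdt, top_le_iff] at this
      rw [this] at hdist
      exact absurd (top_le_iff.mp hdist) (ne_top_of_le_ne_top hε₀top hεε₀)
    · have hlt : ε < δ := lt_of_le_of_lt (min_le_right _ _) (ENNReal.half_lt_self hδ.ne' hdt)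
      exact absurd (hdist.trans_lt (lt_of_lt_of_le hlt this)) (lt_irrefl _)
  have hinj : Set.InjOn F {n | f n = I} := by
    intro a ha b hb hab
    have haS : a ∈ S := by
      by_contra hS
      have := h2 a hS
      rw [Set.mem_setOf_eq.mp ha] at this
      exact absurd ((le_add_left (le_refl (2*ε))).trans_lt key) (not_lt.mpr this)
    have hbS : b ∈ S := by
      by_contra hS
      have := h2 b hS
      rw [Set.mem_setOf_eq.mp hb] at this
      exact absurd ((le_add_left (le_refl (2*ε))).trans_lt key) (not_lt.mpr this)
    exact hbij.injOn haS hbS hab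
  exact Set.ncard_le_ncard_of_injOn F hmem hinj hGfib

lemma separation_part {f g : ℕ → Bar} (hf : TameFam f) (hg : TameFam g)
    (h0 : dBotInf f g = 0) : EquivFam f g := by
  classical
  have hM : ∀ ε : ℝ≥0∞, 0 < ε → InfMatching f g ε := fun ε hε =>
    infMatching_of_lt (h0 ▸ hε)
  have hM' : ∀ ε : ℝ≥0∞, 0 < ε → InfMatching g f ε := fun ε hε => infMatching_symm (hM ε hε)
  have hcard : ∀ I : Bar, 0 < barLength I → {n | f n = I}.ncard = {n | g n = I}.ncard :=
    fun I hI => le_antisymm (fiber_card_le hf hg hM hI) (fiber_card_le hg hf hM' hI)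
  -- build fiberwise equivalences
  have fibEquiv : ∀ I : Bar,
      ((fun n : {n : ℕ // (f n).1 < (f n).2} => f n.val) ⁻¹' {I}) ≃
      ((fun m : {m : ℕ // (g m).1 < (g m).2} => g m.val) ⁻¹' {I}) := by
    intro I
    by_cases hI : I.1 < I.2
    · have hIlen : 0 < barLength I := erealDist_pos (ne_of_lt hI)
      have e1 : ((fun n : {n : ℕ // (f n).1 < (f n).2} => f n.val) ⁻¹' {I}) ≃ {n : ℕ // f n = I} :=
        { toFun := fun x => ⟨x.val.val, x.prop⟩
          invFun := fun n => ⟨⟨n.val, by rw [n.prop]; exact hI⟩, n.prop⟩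
          left_inv := fun x => rfl
          right_inv := fun n => rfl }
      have e2 : ((fun m : {m : ℕ // (g m).1 < (g m).2} => g m.val) ⁻¹' {I}) ≃ {m : ℕ // g m = I} :=
        { toFun := fun x => ⟨x.val.val, x.prop⟩
          invFun := fun m => ⟨⟨m.val, by rw [m.prop]; exact hI⟩, m.prop⟩
          left_inv := fun x => rfl
          right_inv := fun m => rfl }
      have hfin1 : {n : ℕ | f n = I}.Finite := by
        obtain ⟨ℓ', h0', hℓ'⟩ := exists_between hIlen
        exact (hf ℓ' h0').subset fun n hn => by
          simp only [Set.mem_setOf_eq] at hn ⊢; rw [hn]; exact hℓ'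
      have hfin2 : {m : ℕ | g m = I}.Finite := by
        obtain ⟨ℓ', h0', hℓ'⟩ := exists_between hIlen
        exact (hg ℓ' h0').subset fun m hm => by
          simp only [Set.mem_setOf_eq] at hm ⊢; rw [hm]; exact hℓ'
      have : Finite {n : ℕ // f n = I} := hfin1.to_subtype
      have : Finite {m : ℕ // g m = I} := hfin2.to_subtype
      have hc : Nat.card {n : ℕ // f n = I} = Nat.card {m : ℕ // g m = I} := by
        have h' := hcard I hIlen
        rwa [← Nat.card_coe_set_eq, ← Nat.card_coe_set_eq] at h'
      exact e1.trans ((Finite.card_eq.mp hc).some.trans e2.symm)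
    · have h1 : IsEmpty ((fun n : {n : ℕ // (f n).1 < (f n).2} => f n.val) ⁻¹' {I}) := by
        constructor
        rintro ⟨x, hx⟩
        exact hI (hx ▸ x.prop)
      have h2 : IsEmpty ((fun m : {m : ℕ // (g m).1 < (g m).2} => g m.val) ⁻¹' {I}) := by
        constructor
        rintro ⟨x, hx⟩
        exact hI (hx ▸ x.prop)
      exact Equiv.equivOfIsEmpty _ _
  exact ⟨Equiv.ofPreimageEquiv fibEquiv, fun n => Equiv.ofPreimageEquiv_map fibEquiv n⟩

-- batch 5 : geometric helpers and EReal limits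
lemma half_pow_pos (m : ℕ) : (0 : ℝ≥0∞) < 2⁻¹ ^ m :=
  ENNReal.pow_pos (ENNReal.inv_pos.mpr ENNReal.ofNat_ne_top) m

lemma half_pow_ne_top (m : ℕ) : (2⁻¹ : ℝ≥0∞) ^ m ≠ ⊤ :=
  ENNReal.pow_ne_top (ENNReal.inv_ne_top.mpr two_ne_zero)

lemma half_pow_succ (m : ℕ) : (2⁻¹ : ℝ≥0∞) ^ (m+1) + 2⁻¹ ^ (m+1) = 2⁻¹ ^ m := by
  rw [pow_succ, ← mul_add]
  have : (2⁻¹ : ℝ≥0∞) + 2⁻¹ = 1 := by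
    rw [← two_mul, ENNReal.mul_inv_cancel two_ne_zero ENNReal.ofNat_ne_top]
  rw [this, mul_one]

lemma half_pow_succ_le (m : ℕ) : (2⁻¹ : ℝ≥0∞) ^ (m+1) ≤ 2⁻¹ ^ m := by
  conv_rhs => rw [← half_pow_succ m]
  exact le_add_self

lemma half_pow_le {m m' : ℕ} (h : m ≤ m') : (2⁻¹ : ℝ≥0∞) ^ m' ≤ 2⁻¹ ^ m := by
  induction m' with
  | zero => simp_all
  | succ k ih =>
    rcases Nat.lt_or_ge m (k+1) with hlt | hge
    · exact (half_pow_succ_le k).trans (ih (Nat.lt_succ_iff.mp hlt))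
    · have : m = k + 1 := le_antisymm h hge
      rw [this]

lemma toReal_half_pow (m : ℕ) : ((2⁻¹ : ℝ≥0∞) ^ m).toReal = (2⁻¹ : ℝ) ^ m := by
  rw [ENNReal.toReal_pow, ENNReal.toReal_inv]
  norm_num

lemma ofReal_half_pow (m : ℕ) : ENNReal.ofReal ((2⁻¹ : ℝ) ^ m) = (2⁻¹ : ℝ≥0∞) ^ m := by
  rw [ENNReal.ofReal_pow (by norm_num)]
  congr 1
  rw [ENNReal.ofReal_inv_of_pos (by norm_num)]
  norm_num

lemma ereal_lim {x : ℕ → EReal} {K : ℕ}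
    (hd : ∀ j, erealDist (x j) (x (j+1)) ≤ 2⁻¹ ^ (K+j+1)) :
    ∃ L : EReal, ∀ j, erealDist (x j) L ≤ 2⁻¹ ^ (K+j) := by
  by_cases htop : x 0 = ⊤
  · have hall : ∀ j, x j = ⊤ := by
      intro j
      induction j with
      | zero => exact htop
      | succ j ih =>
        exact eq_top_of_erealDist_ne_top (ne_top_of_le_ne_top (half_pow_ne_top _) (hd j)) ih
    exact ⟨⊤, fun j => by rw [hall j, erealDist_self]; exact zero_le⟩
  by_cases hbot : x 0 = ⊥
  · have hall : ∀ j, x j = ⊥ := by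
      intro j
      induction j with
      | zero => exact hbot
      | succ j ih =>
        exact eq_bot_of_erealDist_ne_top (ne_top_of_le_ne_top (half_pow_ne_top _) (hd j)) ih
    exact ⟨⊥, fun j => by rw [hall j, erealDist_self]; exact zero_le⟩
  have hfin : ∀ j, x j ≠ ⊤ ∧ x j ≠ ⊥ := by
    intro j
    induction j with
    | zero => exact ⟨htop, hbot⟩
    | succ j ih =>
      constructor
      · intro h
        exact ih.1 (eq_top_of_erealDist_ne_top
          (by rw [erealDist_comm]; exact ne_top_of_le_ne_top (half_pow_ne_top _) (hd j)) h)
      · intro h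
        exact ih.2 (eq_bot_of_erealDist_ne_top
          (by rw [erealDist_comm]; exact ne_top_of_le_ne_top (half_pow_ne_top _) (hd j)) h)
  set y : ℕ → ℝ := fun j => (x j).toReal with hy
  have hdy : ∀ j, dist (y j) (y (j+1)) ≤ (2⁻¹:ℝ)^(K+1) * (2⁻¹)^j := by
    intro j
    have h := hd j
    rw [erealDist_finite (hfin j).1 (hfin j).2 (hfin (j+1)).1 (hfin (j+1)).2] at h
    rw [ENNReal.ofReal_le_iff_le_toReal (half_pow_ne_top _)] at h
    rw [toReal_half_pow] at h
    rw [Real.dist_eq]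
    calc |y j - y (j+1)| ≤ (2⁻¹:ℝ) ^ (K+j+1) := h
      _ = (2⁻¹:ℝ)^(K+1) * 2⁻¹^j := by rw [← pow_add]; ring_nf
  have hsum : Summable (fun n : ℕ => (2⁻¹:ℝ)^(K+1) * (2⁻¹)^n) :=
    (summable_geometric_of_lt_one (by norm_num) (by norm_num)).mul_left _
  have hcauchy : CauchySeq y := cauchySeq_of_le_geometric 2⁻¹ ((2⁻¹:ℝ)^(K+1)) (by norm_num) hdy
  obtain ⟨l, hl⟩ := cauchySeq_tendsto_of_complete hcauchy
  refine ⟨(l : EReal), fun j => ?_⟩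
  have hdist := dist_le_tsum_of_dist_le_of_tendsto _ hdy hsum hl j
  have htsum : ∑' (m : ℕ), (2⁻¹:ℝ)^(K+1) * (2⁻¹)^(j+m) ≤ (2⁻¹:ℝ)^(K+j) := by
    have : ∀ m : ℕ, (2⁻¹:ℝ)^(K+1) * (2⁻¹)^(j+m) = ((2⁻¹:ℝ)^(K+j+1)) * (2⁻¹)^m := by
      intro m; rw [← pow_add, ← pow_add]; congr 1; ring
    rw [tsum_congr this, tsum_mul_left, tsum_geometric_of_lt_one (by norm_num) (by norm_num)]
    rw [show (1 - 2⁻¹ : ℝ)⁻¹ = 2 by norm_num]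
    rw [show K + j + 1 = (K+j) + 1 by ring, pow_succ]
    rw [mul_assoc]
    norm_num
  rw [erealDist_finite (hfin j).1 (hfin j).2 (by simp) (by simp)]
  have : (↑l : EReal).toReal = l := by simp
  rw [this]
  calc ENNReal.ofReal |(x j).toReal - l| = ENNReal.ofReal (dist (y j) l) := by rw [Real.dist_eq]
    _ ≤ ENNReal.ofReal ((2⁻¹:ℝ)^(K+j)) := ENNReal.ofReal_le_ofReal (hdist.trans htsum)
    _ = 2⁻¹ ^ (K+j) := ofReal_half_pow _

lemma ereal_lim_le {x y : ℕ → EReal} {Lx Ly : EReal} {K : ℕ} (hxy : ∀ j, x j ≤ y j)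
    (hx : ∀ j, erealDist (x j) Lx ≤ 2⁻¹ ^ (K+j)) (hy : ∀ j, erealDist (y j) Ly ≤ 2⁻¹ ^ (K+j)) :
    Lx ≤ Ly := by
  have hfinx : ∀ j, erealDist (x j) Lx ≠ ⊤ := fun j => ne_top_of_le_ne_top (half_pow_ne_top _) (hx j)
  have hfiny : ∀ j, erealDist (y j) Ly ≠ ⊤ := fun j => ne_top_of_le_ne_top (half_pow_ne_top _) (hy j)
  by_cases hLx : Lx = ⊥
  · rw [hLx]; exact bot_le
  by_cases hLy : Ly = ⊤
  · rw [hLy]; exact le_top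
  by_cases hLxt : Lx = ⊤
  · -- x j = ⊤ for all j, so y j = ⊤, so Ly = ⊤: contradiction with hLy
    exfalso
    have hx0 : x 0 = ⊤ := eq_top_of_erealDist_ne_top (by rw [erealDist_comm]; exact hfinx 0) hLxt
    have hy0 : y 0 = ⊤ := top_le_iff.mp (hx0 ▸ hxy 0)
    exact hLy (eq_top_of_erealDist_ne_top (hfiny 0) hy0)
  by_cases hLyb : Ly = ⊥
  · exfalso
    have hy0 : y 0 = ⊥ := eq_bot_of_erealDist_ne_top (by rw [erealDist_comm]; exact hfiny 0) hLyb
    have hx0 : x 0 = ⊥ := le_bot_iff.mp (hy0 ▸ hxy 0)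
    exact hLx (eq_bot_of_erealDist_ne_top (hfinx 0) hx0)
  -- all finite now
  have hxfin : ∀ j, x j ≠ ⊤ ∧ x j ≠ ⊥ := by
    intro j
    constructor
    · intro h; exact hLxt (eq_top_of_erealDist_ne_top (hfinx j) h)
    · intro h; exact hLx (eq_bot_of_erealDist_ne_top (hfinx j) h)
  have hyfin : ∀ j, y j ≠ ⊤ ∧ y j ≠ ⊥ := by
    intro j
    constructor
    · intro h; exact hLy (eq_top_of_erealDist_ne_top (hfiny j) h)
    · intro h; exact hLyb (eq_bot_of_erealDist_ne_top (hfiny j) h)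
  have hreal : ∀ j, Lx.toReal ≤ Ly.toReal + 2 * (2⁻¹:ℝ)^(K+j) := by
    intro j
    have h1 := hx j
    rw [erealDist_finite (hxfin j).1 (hxfin j).2 hLxt hLx,
      ENNReal.ofReal_le_iff_le_toReal (half_pow_ne_top _), toReal_half_pow] at h1
    have h2 := hy j
    rw [erealDist_finite (hyfin j).1 (hyfin j).2 hLy hLyb,
      ENNReal.ofReal_le_iff_le_toReal (half_pow_ne_top _), toReal_half_pow] at h2
    have hxy' : (x j).toReal ≤ (y j).toReal :=
      EReal.toReal_le_toReal (hxy j) (hxfin j).2 (hyfin j).1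
    have a1 : Lx.toReal - (x j).toReal ≤ (2⁻¹:ℝ)^(K+j) := by
      have := abs_le.mp h1; linarith [this.1]
    have a2 : (y j).toReal - Ly.toReal ≤ (2⁻¹:ℝ)^(K+j) := by
      have := abs_le.mp h2; linarith [this.1]
    linarith
  have hfinal : Lx.toReal ≤ Ly.toReal := by
    refine le_of_forall_pos_le_add fun ε hε => ?_
    obtain ⟨n, hn⟩ := exists_pow_lt_of_lt_one (show (0:ℝ) < ε/2 by linarith) (show (2⁻¹:ℝ) < 1 by norm_num)
    calc Lx.toReal ≤ Ly.toReal + 2 * (2⁻¹:ℝ)^(K+n) := hreal n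
      _ ≤ Ly.toReal + 2 * (2⁻¹:ℝ)^n := by
          have : (2⁻¹:ℝ)^(K+n) ≤ (2⁻¹:ℝ)^n :=
            pow_le_pow_of_le_one (by norm_num) (by norm_num) (Nat.le_add_left n K)
          linarith
      _ ≤ Ly.toReal + ε := by linarith
  calc Lx = (Lx.toReal : EReal) := (EReal.coe_toReal hLxt hLx).symm
    _ ≤ (Ly.toReal : EReal) := EReal.coe_le_coe_iff.mpr hfinal
    _ = Ly := EReal.coe_toReal hLy hLyb

lemma bar_limit {x : ℕ → Bar} {K : ℕ} (hv : ∀ j, (x j).1 ≤ (x j).2)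
    (hd : ∀ j, barDist (x j) (x (j+1)) ≤ 2⁻¹ ^ (K+j+1)) :
    ∃ L : Bar, L.1 ≤ L.2 ∧ ∀ j, barDist (x j) L ≤ 2⁻¹ ^ (K+j) := by
  obtain ⟨La, hLa⟩ := ereal_lim (x := fun j => (x j).1) (K := K)
    (fun j => (le_max_left _ _).trans (hd j))
  obtain ⟨Lb, hLb⟩ := ereal_lim (x := fun j => (x j).2) (K := K)
    (fun j => (le_max_right _ _).trans (hd j))
  exact ⟨(La, Lb), ereal_lim_le hv hLa hLb, fun j => max_le (hLa j) (hLb j)⟩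

-- batch 6 : chain-tracking infrastructure
noncomputable def chainRun (S : ℕ → Set ℕ) (F : ℕ → ℕ → ℕ) (k n : ℕ) : ℕ → Option ℕ
  | 0 => some n
  | j+1 => (chainRun S F k n j).bind fun m => if m ∈ S (k+j) then some (F (k+j) m) else none

def chainAlive (S : ℕ → Set ℕ) (F : ℕ → ℕ → ℕ) (k n : ℕ) : Prop :=
  ∀ j, (chainRun S F k n j).isSome

noncomputable def chainIdx (S : ℕ → Set ℕ) (F : ℕ → ℕ → ℕ) (k n j : ℕ) : ℕ :=
  (chainRun S F k n j).getD 0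

section Chain
variable {S T : ℕ → Set ℕ} {F G : ℕ → ℕ → ℕ}

lemma chainRun_zero (k n : ℕ) : chainRun S F k n 0 = some n := rfl

lemma chainRun_succ (k n j : ℕ) :
    chainRun S F k n (j+1) =
      (chainRun S F k n j).bind fun m => if m ∈ S (k+j) then some (F (k+j) m) else none := rfl

lemma chainRun_none_mono {k n i : ℕ} (h : chainRun S F k n i = none) :
    ∀ j, i ≤ j → chainRun S F k n j = none := by
  intro j hij
  induction j with
  | zero => exact (Nat.le_zero.mp hij) ▸ h
  | succ j ih =>
    rcases Nat.lt_or_ge i (j+1) with hlt | hge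
    · rw [chainRun_succ, ih (Nat.lt_succ_iff.mp hlt)]
      rfl
    · have : i = j + 1 := le_antisymm hij hge
      exact this ▸ h

lemma chainRun_isSome_of_le {k n j i : ℕ} (h : (chainRun S F k n j).isSome) (hij : i ≤ j) :
    (chainRun S F k n i).isSome := by
  by_contra hc
  rw [Option.not_isSome_iff_eq_none] at hc
  rw [chainRun_none_mono hc j hij] at h
  exact Bool.noConfusion h

lemma chainRun_append {k n j m : ℕ} (h : chainRun S F k n j = some m) :
    ∀ j', chainRun S F k n (j + j') = chainRun S F (k + j) m j' := by
  intro j'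
  induction j' with
  | zero => exact h
  | succ j' ih =>
    rw [show j + (j' + 1) = (j + j') + 1 by ring, chainRun_succ, ih, chainRun_succ]
    congr 1
    funext m'
    rw [show k + (j + j') = k + j + j' by ring]

lemma chainAlive_shift {k n j m : ℕ} (ha : chainAlive S F k n)
    (h : chainRun S F k n j = some m) : chainAlive S F (k + j) m := by
  intro J
  rw [← chainRun_append h]
  exact ha (j + J)

lemma chainAlive_of_run {k n j m : ℕ} (h : chainRun S F k n j = some m)
    (ha : chainAlive S F (k + j) m) : chainAlive S F k n := by
  intro J
  rcases Nat.lt_or_ge J j with hlt | hge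
  · exact chainRun_isSome_of_le (h ▸ Option.isSome_some) hlt.le
  · rw [show J = j + (J - j) by omega, chainRun_append h]
    exact ha _

lemma chainRun_eq_idx {k n j : ℕ} (h : (chainRun S F k n j).isSome) :
    chainRun S F k n j = some (chainIdx S F k n j) := by
  cases ho : chainRun S F k n j with
  | none => rw [ho] at h; exact Bool.noConfusion h
  | some m => rw [chainIdx, ho]; rfl

lemma chainIdx_zero (k n : ℕ) : chainIdx S F k n 0 = n := rfl

lemma chainAlive_step {k n : ℕ} (ha : chainAlive S F k n) (j : ℕ) :
    chainIdx S F k n j ∈ S (k+j) ∧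
      chainIdx S F k n (j+1) = F (k+j) (chainIdx S F k n j) := by
  have hj := chainRun_eq_idx (ha j)
  have hj1 := ha (j+1)
  rw [chainRun_succ, hj, Option.bind_some] at hj1
  by_cases hmem : chainIdx S F k n j ∈ S (k+j)
  · refine ⟨hmem, ?_⟩
    have hrun : chainRun S F k n (j+1) = some (F (k+j) (chainIdx S F k n j)) := by
      rw [chainRun_succ, hj, Option.bind_some, if_pos hmem]
    rw [chainIdx, hrun]
    rfl
  · rw [if_neg hmem] at hj1
    exact Bool.noConfusion hj1

/-- Backtracking to the birth of a chain. -/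
noncomputable def chainRoot (T : ℕ → Set ℕ) (G : ℕ → ℕ → ℕ) : ℕ → ℕ → ℕ × ℕ
  | 0, n => (0, n)
  | (k+1), n => if n ∈ T k then chainRoot T G k (G k n) else (k+1, n)

lemma chainRoot_spec (hG : ∀ k m, m ∈ T k → G k m ∈ S k ∧ F k (G k m) = m) :
    ∀ k n, (chainRoot T G k n).1 ≤ k ∧
      ((chainRoot T G k n).1 = 0 ∨ (chainRoot T G k n).2 ∉ T ((chainRoot T G k n).1 - 1)) ∧
      chainRun S F (chainRoot T G k n).1 (chainRoot T G k n).2 (k - (chainRoot T G k n).1)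
        = some n := by
  intro k
  induction k with
  | zero => exact fun n => ⟨le_rfl, Or.inl rfl, rfl⟩
  | succ k ih =>
    intro n
    by_cases hn : n ∈ T k
    · have hroot : chainRoot T G (k+1) n = chainRoot T G k (G k n) := by
        rw [chainRoot, if_pos hn]
      obtain ⟨h1, h2, h3⟩ := ih (G k n)
      rw [hroot]
      refine ⟨h1.trans (Nat.le_succ k), h2, ?_⟩
      rw [show k + 1 - (chainRoot T G k (G k n)).1 = (k - (chainRoot T G k (G k n)).1) + 1 by omega,
        chainRun_succ, h3, Option.bind_some]
      rw [show (chainRoot T G k (G k n)).1 + (k - (chainRoot T G k (G k n)).1) = k by omega]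
      rw [if_pos (hG k n hn).1, (hG k n hn).2]
    · have hroot : chainRoot T G (k+1) n = (k+1, n) := by
        rw [chainRoot, if_neg hn]
      rw [hroot]
      exact ⟨le_rfl, Or.inr hn, by rw [Nat.sub_self]; rfl⟩

lemma chainRoot_run (hG : ∀ k m, m ∈ T k → G k m ∈ S k ∧ F k (G k m) = m)
    (hFT : ∀ k n, n ∈ S k → F k n ∈ T k) (hFinj : ∀ k, Set.InjOn (F k) (S k))
    {j0 n0 : ℕ} (hborn : j0 = 0 ∨ n0 ∉ T (j0 - 1)) :
    ∀ d n, chainRun S F j0 n0 d = some n → chainRoot T G (j0 + d) n = (j0, n0) := by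
  intro d
  induction d with
  | zero =>
    intro n h
    have : n = n0 := by rw [chainRun_zero] at h; exact (Option.some_inj.mp h).symm
    subst this
    cases j0 with
    | zero => rfl
    | succ t =>
      rcases hborn with h0 | hb
      · exact Nat.noConfusion h0
      · simp only [Nat.add_sub_cancel] at hb
        rw [chainRoot, if_neg hb]
  | succ d ih =>
    intro n h
    rw [chainRun_succ] at h
    cases hm : chainRun S F j0 n0 d with
    | none => rw [hm] at h; simp at h
    | some m =>
      rw [hm, Option.bind_some] at h
      by_cases hmem : m ∈ S (j0 + d)
      · rw [if_pos hmem] at h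
        have hn : n = F (j0 + d) m := (Option.some_inj.mp h).symm
        have hnT : n ∈ T (j0 + d) := hn ▸ hFT _ _ hmem
        have hroot : chainRoot T G (j0 + d + 1) n = chainRoot T G (j0 + d) (G (j0 + d) n) := by
          rw [chainRoot, if_pos hnT]
        have hGn : G (j0 + d) n = m := by
          have h1 := hG (j0 + d) n hnT
          apply hFinj (j0 + d) h1.1 hmem
          rw [h1.2, hn]
        rw [show j0 + (d+1) = j0 + d + 1 by ring, hroot, hGn]
        exact ih m hm
      · rw [if_neg hmem] at h
        simp at h

end Chain

-- batch 7 : completeness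
lemma half_pow_succ_lt (m : ℕ) : (2⁻¹ : ℝ≥0∞) ^ (m+1) < 2⁻¹ ^ m := by
  conv_rhs => rw [← half_pow_succ m]
  exact ENNReal.lt_add_right (half_pow_ne_top _) (half_pow_pos _).ne'

lemma two_mul_half_pow (m : ℕ) : 2 * (2⁻¹ : ℝ≥0∞) ^ (m+1) = 2⁻¹ ^ m := by
  rw [two_mul, half_pow_succ]

lemma chainRun_dies {S : ℕ → Set ℕ} {F : ℕ → ℕ → ℕ} {k n J : ℕ}
    (h : chainRun S F k n J = none) :
    ∃ j m, chainRun S F k n j = some m ∧ m ∉ S (k+j) := by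
  induction J with
  | zero => rw [chainRun_zero] at h; simp at h
  | succ J ih =>
    cases hm : chainRun S F k n J with
    | none => exact ih hm
    | some m =>
      rw [chainRun_succ, hm, Option.bind_some] at h
      by_cases hmem : m ∈ S (k+J)
      · rw [if_pos hmem] at h; simp at h
      · exact ⟨J, m, hm, hmem⟩

lemma completeness_part (u : ℕ → ℕ → Bar) (hu : ∀ n, ValidFam (u n) ∧ TameFam (u n))
    (hC : ∀ ε : ℝ≥0∞, 0 < ε → ∃ N, ∀ m n, N ≤ m → N ≤ n → dBotInf (u m) (u n) ≤ ε) :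
    ∃ f : ℕ → Bar, ValidFam f ∧ TameFam f ∧
      ∀ ε : ℝ≥0∞, 0 < ε → ∃ N, ∀ n, N ≤ n → dBotInf (u n) f ≤ ε := by
  classical
  have hNex : ∀ k : ℕ, ∃ N, ∀ m n, N ≤ m → N ≤ n → dBotInf (u m) (u n) ≤ 2⁻¹ ^ (k+2) :=
    fun k => hC _ (half_pow_pos (k+2))
  choose N hN using hNex
  set φ : ℕ → ℕ := fun k => Nat.rec (N 0) (fun k ih => max (ih + 1) (N (k+1))) k with hφdef
  have hφsucc : ∀ k, φ k < φ (k+1) := fun k =>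
    lt_of_lt_of_le (Nat.lt_succ_self _) (le_max_left _ _)
  have hφmono : Monotone φ := monotone_nat_of_le_succ fun k => (hφsucc k).le
  have hφN : ∀ k, N k ≤ φ k := by
    intro k
    cases k with
    | zero => exact le_rfl
    | succ k => exact le_max_right _ _
  have hφk : ∀ k, k ≤ φ k := by
    intro k
    induction k with
    | zero => exact Nat.zero_le _
    | succ k ih => exact lt_of_le_of_lt ih (hφsucc k)
  set v : ℕ → ℕ → Bar := fun k => u (φ k) with hvdef
  have hvval : ∀ k, ValidFam (v k) := fun k => (hu _).1
  have hvtame : ∀ k, TameFam (v k) := fun k => (hu _).2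
  have hM : ∀ k, InfMatching (v k) (v (k+1)) (2⁻¹ ^ (k+1)) := by
    intro k
    refine infMatching_of_lt (lt_of_le_of_lt ?_ (half_pow_succ_lt (k+1)))
    exact hN k (φ k) (φ (k+1)) (hφN k) ((hφN k).trans (hφmono (Nat.le_succ k)))
  have hMfun := fun k => infMatching_iff_fun.mp (hM k)
  choose S T F hbij h1 h2 h3 using hMfun
  have hFT : ∀ k n, n ∈ S k → F k n ∈ T k := fun k n h => (hbij k).mapsTo h
  have hFinj : ∀ k, Set.InjOn (F k) (S k) := fun k => (hbij k).injOn
  have hGex : ∀ k m, ∃ z, m ∈ T k → z ∈ S k ∧ F k z = m := by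
    intro k m
    by_cases h : m ∈ T k
    · obtain ⟨z, hz, hzm⟩ := (hbij k).surjOn h
      exact ⟨z, fun _ => ⟨hz, hzm⟩⟩
    · exact ⟨0, fun h' => absurd h' h⟩
  choose G hG using hGex
  -- the telescoping estimate along a chain
  have htel : ∀ j k n m, chainRun S F k n j = some m →
      barDist (v k n) (v (k+j) m) + 2⁻¹ ^ (k+j) ≤ 2⁻¹ ^ k := by
    intro j
    induction j with
    | zero =>
      intro k n m h
      rw [chainRun_zero] at h
      rw [← Option.some_inj.mp h]
      rw [Nat.add_zero, barDist_self, zero_add]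
    | succ j ih =>
      intro k n m h
      rw [chainRun_succ] at h
      cases hm' : chainRun S F k n j with
      | none => rw [hm'] at h; simp at h
      | some m' =>
        rw [hm', Option.bind_some] at h
        by_cases hmem : m' ∈ S (k+j)
        · rw [if_pos hmem] at h
          have hmval : m = F (k+j) m' := (Option.some_inj.mp h).symm
          have hd : barDist (v (k+j) m') (v (k+j+1) m) ≤ 2⁻¹ ^ (k+j+1) := by
            rw [hmval]; exact h1 (k+j) m' hmem
          rw [show k+(j+1) = k+j+1 by ring]
          calc barDist (v k n) (v (k+j+1) m) + 2⁻¹ ^ (k+j+1)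
              ≤ barDist (v k n) (v (k+j) m') + barDist (v (k+j) m') (v (k+j+1) m)
                  + 2⁻¹ ^ (k+j+1) :=
                add_le_add_left (barDist_triangle _ _ _) _
            _ ≤ barDist (v k n) (v (k+j) m') + 2⁻¹ ^ (k+j+1) + 2⁻¹ ^ (k+j+1) :=
                add_le_add_left (add_le_add_right hd _) _
            _ = barDist (v k n) (v (k+j) m') + (2⁻¹ ^ (k+j+1) + 2⁻¹ ^ (k+j+1)) := by
                rw [add_assoc]
            _ = barDist (v k n) (v (k+j) m') + 2⁻¹ ^ (k+j) := by rw [half_pow_succ]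
            _ ≤ 2⁻¹ ^ k := ih k n m' hm'
        · rw [if_neg hmem] at h; simp at h
  -- the limit bar of each chain
  have hLex : ∀ p : ℕ × ℕ, ∃ L : Bar, L.1 ≤ L.2 ∧ (chainAlive S F p.1 p.2 →
      ∀ j, barDist (v (p.1 + j) (chainIdx S F p.1 p.2 j)) L ≤ 2⁻¹ ^ (p.1 + j)) := by
    intro p
    by_cases ha : chainAlive S F p.1 p.2
    · obtain ⟨L, hL1, hL2⟩ := bar_limit (x := fun j => v (p.1+j) (chainIdx S F p.1 p.2 j))
        (K := p.1) (fun j => hvval _ _) (fun j => by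
          have hstep := chainAlive_step ha j
          show barDist (v (p.1+j) (chainIdx S F p.1 p.2 j))
            (v (p.1+(j+1)) (chainIdx S F p.1 p.2 (j+1))) ≤ 2⁻¹ ^ (p.1+j+1)
          rw [show p.1+(j+1) = p.1+j+1 by ring, hstep.2]
          exact h1 (p.1+j) _ hstep.1)
      exact ⟨L, hL1, fun _ => hL2⟩
    · exact ⟨((0:EReal), (0:EReal)), le_rfl, fun h => absurd h ha⟩
  choose Lbar hLv hLd using hLex
  set Born : ℕ × ℕ → Prop := fun p =>
    chainAlive S F p.1 p.2 ∧ (p.1 = 0 ∨ p.2 ∉ T (p.1 - 1)) with hBorndef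
  set ee : ℕ ≃ ℕ × ℕ := (Denumerable.eqv (ℕ × ℕ)).symm with heedef
  set f : ℕ → Bar := fun i => if Born (ee i) then Lbar (ee i) else ((0:EReal), (0:EReal))
    with hfdef
  have hfval : ValidFam f := by
    intro i
    simp only [hfdef]
    by_cases h : Born (ee i)
    · rw [if_pos h]; exact hLv _
    · rw [if_neg h]
  -- length bound for bars born late
  have hsmall : ∀ p : ℕ × ℕ, Born p → ∀ t, p.1 = t+1 →
      barLength (Lbar p) ≤ 2 * 2⁻¹ ^ t := by
    intro p hB t ht
    have hT : p.2 ∉ T t := by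
      rcases hB.2 with h0 | hT'
      · rw [ht] at h0; exact Nat.noConfusion h0
      · rw [ht] at hT'; exact hT'
    have hlen : barLength (v (t+1) p.2) ≤ 2 * 2⁻¹ ^ (t+1) := h3 t p.2 hT
    have hd0 : barDist (v p.1 p.2) (Lbar p) ≤ 2⁻¹ ^ p.1 := by
      have := hLd p hB.1 0
      rw [Nat.add_zero, chainIdx_zero] at this
      exact this
    rw [ht] at hd0
    calc barLength (Lbar p)
        ≤ barLength (v (t+1) p.2) + 2 * barDist (Lbar p) (v (t+1) p.2) := barLength_le _ _
      _ = barLength (v (t+1) p.2) + 2 * barDist (v (t+1) p.2) (Lbar p) := by rw [barDist_comm]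
      _ ≤ 2 * 2⁻¹ ^ (t+1) + 2 * 2⁻¹ ^ (t+1) := add_le_add hlen (mul_le_mul_right hd0 2)
      _ = 2 * (2⁻¹ ^ (t+1) + 2⁻¹ ^ (t+1)) := by ring
      _ = 2 * 2⁻¹ ^ t := by rw [half_pow_succ]
  -- a root recovered from a live chain
  have hrootinj : ∀ k n n', chainRoot T G k n = chainRoot T G k n' → n = n' := by
    intro k n n' hr
    have s1 := (chainRoot_spec hG k n).2.2
    have s2 := (chainRoot_spec hG k n').2.2
    rw [hr] at s1
    rw [s1] at s2
    exact Option.some_inj.mp s2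
  -- the matching between v k and f
  have hMATCH : ∀ k, InfMatching (v k) f (2⁻¹ ^ k) := by
    intro k
    rw [infMatching_iff_fun]
    set Sk : Set ℕ := {n | chainAlive S F k n} with hSkdef
    set Fk : ℕ → ℕ := fun n => ee.symm (chainRoot T G k n) with hFkdef
    have hFkinj : Set.InjOn Fk Sk := by
      intro a _ b _ hab
      exact hrootinj k a b (ee.symm.injective hab)
    refine ⟨Sk, Fk '' Sk, Fk, hFkinj.bijOn_image, ?_, ?_, ?_⟩
    · -- matched bars
      intro n hn
      have halive : chainAlive S F k n := hn
      obtain ⟨hle, hmid, hrun⟩ := chainRoot_spec (S := S) (F := F) hG k n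
      set p := chainRoot T G k n with hpdef
      have hBp : Born p := by
        refine ⟨chainAlive_of_run hrun ?_, hmid⟩
        rw [show p.1 + (k - p.1) = k from by omega]
        exact halive
      have hfeq : f (Fk n) = Lbar p := by
        simp only [hfdef, hFkdef]
        rw [Equiv.apply_symm_apply, if_pos hBp]
      rw [hfeq]
      have hidx : chainIdx S F p.1 p.2 (k - p.1) = n := by
        rw [chainIdx, hrun]; rfl
      have := hLd p hBp.1 (k - p.1)
      rw [hidx, show p.1 + (k - p.1) = k from by omega] at this
      exact this
    · -- dying chains
      intro n hn
      have : ¬ chainAlive S F k n := hn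
      rw [chainAlive] at this
      push_neg at this
      obtain ⟨J, hJ⟩ := this
      have hJnone : chainRun S F k n J = none := by
        cases ho : chainRun S F k n J with
        | none => rfl
        | some m => exact absurd (by rw [ho]; rfl) hJ
      obtain ⟨j, m, hrun, hmem⟩ := chainRun_dies hJnone
      have hD := htel j k n m hrun
      calc barLength (v k n)
          ≤ barLength (v (k+j) m) + 2 * barDist (v k n) (v (k+j) m) := barLength_le _ _
        _ ≤ 2 * 2⁻¹ ^ (k+j+1) + 2 * barDist (v k n) (v (k+j) m) :=
            add_le_add_left (h2 (k+j) m hmem) _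
        _ = 2 * (2⁻¹ ^ (k+j+1) + barDist (v k n) (v (k+j) m)) := by ring
        _ ≤ 2 * (2⁻¹ ^ (k+j) + barDist (v k n) (v (k+j) m)) :=
            mul_le_mul_right (add_le_add_left (half_pow_succ_le _) _) 2
        _ = 2 * (barDist (v k n) (v (k+j) m) + 2⁻¹ ^ (k+j)) := by rw [add_comm (2⁻¹ ^ (k+j))]
        _ ≤ 2 * 2⁻¹ ^ k := mul_le_mul_right hD 2
    · -- unmatched limit bars
      intro i hi
      by_cases hB : Born (ee i)
      · set p := ee i with hpdef
        rcases Nat.lt_or_ge k p.1 with hkp | hpk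
        · -- born after time k : short bar
          have hfi : f i = Lbar p := by
            simp only [hfdef]
            rw [if_pos hB]
          cases hp1 : p.1 with
          | zero => omega
          | succ t =>
            have ht : t ≥ k := by omega
            calc barLength (f i) = barLength (Lbar p) := by rw [hfi]
              _ ≤ 2 * 2⁻¹ ^ t := hsmall p hB t hp1
              _ ≤ 2 * 2⁻¹ ^ k := mul_le_mul_right (half_pow_le ht) 2
        · -- passes through time k : contradiction with unmatchedness
          exfalso
          have hrun := chainRun_eq_idx (hB.1 (k - p.1))
          set n := chainIdx S F p.1 p.2 (k - p.1) with hndef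
          have halive : chainAlive S F k n := by
            have := chainAlive_shift hB.1 hrun
            rwa [show p.1 + (k - p.1) = k from by omega] at this
          have hroot : chainRoot T G k n = p := by
            have := chainRoot_run hG hFT hFinj hB.2 (k - p.1) n hrun
            rw [show p.1 + (k - p.1) = k from by omega] at this
            rw [this]
          apply hi
          refine ⟨n, halive, ?_⟩
          rw [hFkdef]
          simp only
          rw [hroot, hpdef, Equiv.symm_apply_apply]
      · have hfi : f i = ((0:EReal), (0:EReal)) := by
          simp only [hfdef]
          rw [if_neg hB]
        rw [hfi]
        simp [barLength, erealDist_self]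
  have hdvf : ∀ k, dBotInf (v k) f ≤ 2⁻¹ ^ k := fun k => dBotInf_le (hMATCH k)
  -- tameness of the limit
  have hftame : TameFam f := by
    intro ε hε
    rcases eq_or_ne ε ⊤ with rfl | hεt
    · refine Set.Finite.subset Set.finite_empty fun i hi => ?_
      simp only [Set.mem_setOf_eq] at hi
      exact absurd hi (not_lt.mpr le_top)
    have hε2 : (ε / 2 : ℝ≥0∞) ≠ 0 := (ENNReal.half_pos hε.ne').ne'
    obtain ⟨K, hK⟩ := ENNReal.exists_inv_two_pow_lt hε2
    set ψ : ℕ → ℕ := fun i => chainIdx S F (ee i).1 (ee i).2 (K + 1 - (ee i).1) with hψdef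
    have hKey : ∀ i, ε < barLength (f i) →
        Born (ee i) ∧ (ee i).1 ≤ K + 1 ∧ chainRoot T G (K+1) (ψ i) = ee i ∧
          ε / 2 < barLength (v (K+1) (ψ i)) := by
      intro i hi
      have hB : Born (ee i) := by
        by_contra hB
        have hfi : f i = ((0:EReal), (0:EReal)) := by
          simp only [hfdef]; rw [if_neg hB]
        rw [hfi] at hi
        simp [barLength, erealDist_self] at hi
      have hfi : f i = Lbar (ee i) := by
        simp only [hfdef]; rw [if_pos hB]
      rw [hfi] at hi
      have hp1 : (ee i).1 ≤ K + 1 := by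
        by_contra hp1
        push_neg at hp1
        obtain ⟨t, ht⟩ : ∃ t, (ee i).1 = t + 1 := ⟨(ee i).1 - 1, by omega⟩
        have hlen := hsmall (ee i) hB t ht
        have htK : K + 1 ≤ t := by omega
        have : barLength (Lbar (ee i)) ≤ 2⁻¹ ^ K := by
          calc barLength (Lbar (ee i)) ≤ 2 * 2⁻¹ ^ t := hlen
            _ ≤ 2 * 2⁻¹ ^ (K+1) := mul_le_mul_right (half_pow_le htK) 2
            _ = 2⁻¹ ^ K := two_mul_half_pow K
        exact absurd (hi.trans_le this) (not_lt.mpr ((hK.le.trans ENNReal.half_le_self)))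
      have hrun := chainRun_eq_idx (hB.1 (K + 1 - (ee i).1))
      have hroot : chainRoot T G (K+1) (ψ i) = ee i := by
        have := chainRoot_run hG hFT hFinj hB.2 (K + 1 - (ee i).1) (ψ i) hrun
        rw [show (ee i).1 + (K + 1 - (ee i).1) = K + 1 from by omega] at this
        rw [this]
      refine ⟨hB, hp1, hroot, ?_⟩
      have hdist := hLd (ee i) hB.1 (K + 1 - (ee i).1)
      rw [show (ee i).1 + (K + 1 - (ee i).1) = K + 1 from by omega] at hdist
      by_contra hlen
      push_neg at hlen
      have : barLength (Lbar (ee i)) ≤ ε := by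
        calc barLength (Lbar (ee i))
            ≤ barLength (v (K+1) (ψ i)) + 2 * barDist (v (K+1) (ψ i)) (Lbar (ee i)) := by
              rw [barDist_comm]
              exact barLength_le _ _
          _ ≤ ε / 2 + 2 * 2⁻¹ ^ (K+1) := add_le_add hlen (mul_le_mul_right hdist 2)
          _ = ε / 2 + 2⁻¹ ^ K := by rw [two_mul_half_pow]
          _ ≤ ε / 2 + ε / 2 := add_le_add_right hK.le _
          _ = ε := ENNReal.add_halves ε
      exact absurd hi (not_lt.mpr this)
    have hBfin : {n | ε / 2 < barLength (v (K+1) n)}.Finite :=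
      hvtame (K+1) (ε/2) (pos_iff_ne_zero.mpr hε2)
    refine Set.Finite.of_finite_image (f := ψ) (hBfin.subset ?_) ?_
    · rintro x ⟨i, hi, rfl⟩
      exact (hKey i hi).2.2.2
    · intro a ha b hb hab
      have ra := (hKey a ha).2.2.1
      have rb := (hKey b hb).2.2.1
      rw [hab] at ra
      exact ee.injective (ra.symm.trans rb)
  refine ⟨f, hfval, hftame, ?_⟩
  intro ε hε
  rcases eq_or_ne ε ⊤ with rfl | hεt
  · exact ⟨0, fun n _ => le_top⟩
  have hε2 : (ε / 2 : ℝ≥0∞) ≠ 0 := (ENNReal.half_pos hε.ne').ne'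
  obtain ⟨K0, hK0⟩ := ENNReal.exists_inv_two_pow_lt hε2
  obtain ⟨N', hN'⟩ := hC (ε/2) (pos_iff_ne_zero.mpr hε2)
  set k := max K0 N' with hkdef
  refine ⟨N', fun n hn => ?_⟩
  calc dBotInf (u n) f ≤ dBotInf (u n) (v k) + dBotInf (v k) f := dBotInf_triangle _ _ _
    _ ≤ ε / 2 + 2⁻¹ ^ k := by
        refine add_le_add (hN' n (φ k) hn ?_) (hdvf k)
        exact le_trans (le_max_right K0 N') (hφk k)
    _ ≤ ε / 2 + ε / 2 := by
        refine add_le_add_right ?_ _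
        exact le_trans (half_pow_le (le_max_left K0 N')) hK0.le
    _ = ε := ENNReal.add_halves ε

/-- The space of infinite barcodes with the finiteness property, equipped with the
bottleneck distance, is a complete extended metric space in which the finite barcodes
form a dense subset. -/
theorem stmt6 :
    -- reflexivity
    (∀ f : ℕ → Bar, ValidFam f → TameFam f → dBotInf f f = 0) ∧
    -- symmetry
    (∀ f g : ℕ → Bar, ValidFam f → ValidFam g → TameFam f → TameFam g →
      dBotInf f g = dBotInf g f) ∧
    -- triangle inequality
    (∀ f g h : ℕ → Bar, ValidFam f → ValidFam g → ValidFam h →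
      TameFam f → TameFam g → TameFam h →
      dBotInf f h ≤ dBotInf f g + dBotInf g h) ∧
    -- separation: distance zero implies equality of barcodes
    (∀ f g : ℕ → Bar, ValidFam f → ValidFam g → TameFam f → TameFam g →
      dBotInf f g = 0 → EquivFam f g) ∧
    -- completeness: every Cauchy sequence of such barcodes converges to one of them
    (∀ u : ℕ → ℕ → Bar, (∀ n, ValidFam (u n) ∧ TameFam (u n)) →
      (∀ ε : ℝ≥0∞, 0 < ε → ∃ N, ∀ m n, N ≤ m → N ≤ n → dBotInf (u m) (u n) ≤ ε) →
      ∃ f : ℕ → Bar, ValidFam f ∧ TameFam f ∧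
        ∀ ε : ℝ≥0∞, 0 < ε → ∃ N, ∀ n, N ≤ n → dBotInf (u n) f ≤ ε) ∧
    -- density of the finite barcodes
    (∀ f : ℕ → Bar, ValidFam f → TameFam f → ∀ ε : ℝ≥0∞, 0 < ε →
      ∃ g : ℕ → Bar, ValidFam g ∧ FiniteFam g ∧ dBotInf f g ≤ ε) := by
  refine ⟨?_, ?_, ?_, ?_, ?_, ?_⟩
  · intro f _ _
    exact le_antisymm (dBotInf_le (infMatching_self f)) (zero_le)
  · intro f g _ _ _ _
    exact dBotInf_symm f g
  · intro f g h _ _ _ _ _ _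
    exact dBotInf_triangle f g h
  · intro f g _ _ hf hg h0
    exact separation_part hf hg h0
  · intro u hu hC
    exact completeness_part u hu hC
  · intro f hv ht ε hε
    exact density_part f hv ht ε hε
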